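/- For every real μ > 0, the mean of the load distribution satisfies ∑_{l=0}^{∞} l · (3.5^{3.5}/l!) · (Γ(l+4.5)/Γ(3.5)) · μ^{l} · (3.5+μ)^{−(l+4.5)} = (9/7)·μ; consequently the mean load (the mean number of users served by the tagged BS, including the tagged user) equals ∑_{l=0}^{∞} (l+1) · (3.5^{3.5}/l!) · (Γ(l+4.5)/Γ(3.5)) · μ^{l} · (3.5+μ)^{−(l+4.5)} = 1 + (9/7)·μ. -/

import Mathlib

open Real MeasureTheory Set

lemma key_hasSum {a s μ : ℝ} (ha : 0 < a) (hs : 0 < s) (hμ : 0 < μ) :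
    HasSum (fun l : ℕ => Real.Gamma ((l : ℝ) + s) / (l.factorial : ℝ) * μ ^ l *
      (a + μ) ^ (-((l : ℝ) + s))) (Real.Gamma s * a ^ (-s)) := by
  set c : ℝ := a + μ with hc_def
  have hc : 0 < c := by positivity
  set g : ℕ → ℝ := fun l => Real.Gamma ((l : ℝ) + s) / (l.factorial : ℝ) * μ ^ l *
      c ^ (-((l : ℝ) + s)) with hg_def
  set F : ℕ → ℝ → ℝ := fun l t =>
      μ ^ l / (l.factorial : ℝ) * (t ^ ((l : ℝ) + s - 1) * Real.exp (-(c * t))) with hF_def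
  have hls : ∀ l : ℕ, (0 : ℝ) < (l : ℝ) + s := fun l =>
    add_pos_of_nonneg_of_pos (Nat.cast_nonneg l) hs
  have hF_nn : ∀ (l : ℕ) (t : ℝ), 0 ≤ t → 0 ≤ F l t := by
    intro l t ht
    have h1 : (0:ℝ) ≤ t ^ ((l : ℝ) + s - 1) := Real.rpow_nonneg ht _
    have h2 : (0:ℝ) ≤ μ ^ l / (l.factorial : ℝ) := by positivity
    exact mul_nonneg h2 (mul_nonneg h1 (Real.exp_nonneg _))
  have hg0 : ∀ l, 0 ≤ g l := by
    intro l
    have hΓ : 0 ≤ Real.Gamma ((l : ℝ) + s) := Real.Gamma_nonneg_of_nonneg (hls l).le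
    exact mul_nonneg (mul_nonneg (div_nonneg hΓ (Nat.cast_nonneg _)) (pow_nonneg hμ.le _))
      (Real.rpow_nonneg hc.le _)
  -- integrability
  have hInt : ∀ l : ℕ, IntegrableOn (F l) (Ioi 0) volume := by
    intro l
    have h := integrableOn_rpow_mul_exp_neg_mul_rpow
      (show (-1:ℝ) < (l : ℝ) + s - 1 by nlinarith [hls l]) zero_lt_one hc
    have h' : IntegrableOn (fun t : ℝ => t ^ ((l : ℝ) + s - 1) * Real.exp (-(c * t)))
        (Ioi 0) volume := by
      refine h.congr_fun (fun t ht => ?_) measurableSet_Ioi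
      simp only [Real.rpow_one, neg_mul]
    exact h'.const_mul _
  -- value of each integral
  have hval : ∀ l : ℕ, ∫ t in Ioi 0, F l t = g l := by
    intro l
    rw [hF_def]
    simp only
    rw [MeasureTheory.integral_const_mul, integral_rpow_mul_exp_neg_mul_Ioi (hls l) hc,
      one_div, Real.inv_rpow hc.le, ← Real.rpow_neg hc.le]
    rw [hg_def]; ring
  -- pointwise sum
  have hpt : ∀ t ∈ Ioi (0:ℝ), HasSum (fun l => F l t)
      (t ^ (s - 1) * Real.exp (-(a * t))) := by
    intro t ht
    rw [mem_Ioi] at ht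
    have he : HasSum (fun n : ℕ => (μ * t) ^ n / (n.factorial : ℝ))
        (Real.exp (μ * t)) := by
      rw [Real.exp_eq_exp_ℝ]
      exact NormedSpace.expSeries_div_hasSum_exp (μ * t)
    have h2 := he.mul_left (t ^ (s - 1) * Real.exp (-(c * t)))
    have hfun : ∀ l : ℕ, t ^ (s - 1) * Real.exp (-(c * t)) *
        ((μ * t) ^ l / (l.factorial : ℝ)) = F l t := by
      intro l
      rw [hF_def]; simp only
      rw [show (l : ℝ) + s - 1 = (l : ℝ) + (s - 1) by ring,
        Real.rpow_add ht, Real.rpow_natCast, mul_pow]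
      ring
    have hv : t ^ (s - 1) * Real.exp (-(c * t)) * Real.exp (μ * t)
        = t ^ (s - 1) * Real.exp (-(a * t)) := by
      rw [mul_assoc, ← Real.exp_add, hc_def]
      ring_nf
    rw [← hv]
    exact h2.congr_fun fun l => (hfun l).symm
  -- target integrand integrable
  have hTInt : IntegrableOn (fun t : ℝ => t ^ (s - 1) * Real.exp (-(a * t)))
      (Ioi 0) volume := by
    have h := integrableOn_rpow_mul_exp_neg_mul_rpow
      (show (-1:ℝ) < s - 1 by linarith) zero_lt_one ha
    refine h.congr_fun (fun t ht => ?_) measurableSet_Ioi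
    simp only [Real.rpow_one, neg_mul]
  -- ENNReal computation
  have hFm : ∀ l : ℕ, AEMeasurable (fun t => ENNReal.ofReal (F l t))
      (volume.restrict (Ioi 0)) :=
    fun l => ((hInt l).aestronglyMeasurable.aemeasurable).ennreal_ofReal
  have key : ∑' l, ENNReal.ofReal (g l)
      = ENNReal.ofReal ((1 / a) ^ s * Real.Gamma s) := by
    calc ∑' l, ENNReal.ofReal (g l)
        = ∑' l, ∫⁻ t in Ioi 0, ENNReal.ofReal (F l t) := by
          refine tsum_congr fun l => ?_
          rw [← ofReal_integral_eq_lintegral_ofReal (hInt l) ?_, hval l]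
          filter_upwards [ae_restrict_mem measurableSet_Ioi] with t ht
          exact hF_nn l t (le_of_lt ht)
      _ = ∫⁻ t in Ioi 0, ∑' l, ENNReal.ofReal (F l t) := (lintegral_tsum hFm).symm
      _ = ∫⁻ t in Ioi 0, ENNReal.ofReal (t ^ (s - 1) * Real.exp (-(a * t))) := by
          refine setLIntegral_congr_fun measurableSet_Ioi (fun t ht => ?_)
          rw [← ENNReal.ofReal_tsum_of_nonneg (fun l => hF_nn l t (le_of_lt ht))
            (hpt t ht).summable, (hpt t ht).tsum_eq]
      _ = ENNReal.ofReal ((1 / a) ^ s * Real.Gamma s) := by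
          rw [← ofReal_integral_eq_lintegral_ofReal hTInt ?_,
            integral_rpow_mul_exp_neg_mul_Ioi hs ha]
          filter_upwards [ae_restrict_mem measurableSet_Ioi] with t ht
          exact mul_nonneg (Real.rpow_nonneg (le_of_lt ht) _) (Real.exp_nonneg _)
  have hG0 : 0 ≤ (1 / a) ^ s * Real.Gamma s := by positivity
  have hsum : Summable g := by
    have h := ENNReal.summable_toReal (f := fun l => ENNReal.ofReal (g l))
      (by rw [key]; exact ENNReal.ofReal_ne_top)
    exact h.congr fun l => ENNReal.toReal_ofReal (hg0 l)
  have htsum : ∑' l, g l = (1 / a) ^ s * Real.Gamma s := by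
    have h1 : ENNReal.ofReal (∑' l, g l)
        = ENNReal.ofReal ((1 / a) ^ s * Real.Gamma s) := by
      rw [ENNReal.ofReal_tsum_of_nonneg hg0 hsum, key]
    exact (ENNReal.ofReal_eq_ofReal_iff (tsum_nonneg hg0) hG0).mp h1
  refine (Summable.hasSum_iff hsum).mpr ?_
  rw [htsum, one_div, Real.inv_rpow ha.le, ← Real.rpow_neg ha.le, mul_comm]

/-- The mean of the load distribution: `∑ l · P_L(l+1) = (9/7) μ`, and consequently the
mean load `∑ (l+1) · P_L(l+1) = 1 + (9/7) μ`. -/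
theorem load_pmf_mean (μ : ℝ) (hμ : 0 < μ) :
    (∑' l : ℕ,
        (l : ℝ) * ((3.5 ^ (3.5 : ℝ) / (l.factorial : ℝ)) *
          (Real.Gamma ((l : ℝ) + 4.5) / Real.Gamma 3.5) *
          μ ^ l * (3.5 + μ) ^ (-((l : ℝ) + 4.5))) = (9 / 7) * μ) ∧
    (∑' l : ℕ,
        ((l : ℝ) + 1) * ((3.5 ^ (3.5 : ℝ) / (l.factorial : ℝ)) *
          (Real.Gamma ((l : ℝ) + 4.5) / Real.Gamma 3.5) *
          μ ^ l * (3.5 + μ) ^ (-((l : ℝ) + 4.5))) = 1 + (9 / 7) * μ) := by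
  have hΓpos : 0 < Real.Gamma 3.5 := Real.Gamma_pos_of_pos (by norm_num)
  have hΓ45 : Real.Gamma 4.5 = 3.5 * Real.Gamma 3.5 := by
    rw [show (4.5:ℝ) = 3.5 + 1 by norm_num, Real.Gamma_add_one (by norm_num)]
  have hΓ55 : Real.Gamma 5.5 = 4.5 * Real.Gamma 4.5 := by
    rw [show (5.5:ℝ) = 4.5 + 1 by norm_num, Real.Gamma_add_one (by norm_num)]
  set P : ℕ → ℝ := fun l => (3.5 ^ (3.5 : ℝ) / (l.factorial : ℝ)) *
      (Real.Gamma ((l : ℝ) + 4.5) / Real.Gamma 3.5) *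
      μ ^ l * (3.5 + μ) ^ (-((l : ℝ) + 4.5)) with hP_def
  have h35 : (0:ℝ) < 3.5 := by norm_num
  have hpow : ∀ x y : ℝ, (3.5:ℝ) ^ (x:ℝ) * (3.5:ℝ) ^ (y:ℝ) = 3.5 ^ (x + y) :=
    fun x y => (Real.rpow_add h35 x y).symm
  -- normalization : HasSum P 1
  have h1 := key_hasSum (a := 3.5) (s := 4.5) h35 (by norm_num) hμ
  have hP : HasSum P 1 := by
    have h := h1.mul_left ((3.5:ℝ) ^ (3.5:ℝ) / Real.Gamma 3.5)
    have hv : (3.5:ℝ) ^ (3.5:ℝ) / Real.Gamma 3.5 * (Real.Gamma 4.5 * (3.5:ℝ) ^ (-(4.5:ℝ)))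
        = 1 := by
      have e : (3.5:ℝ) ^ (3.5:ℝ) * (3.5:ℝ) ^ (-(4.5:ℝ)) = (3.5:ℝ) ^ (-1 : ℝ) :=
        (hpow 3.5 (-4.5)).trans (by norm_num)
      calc (3.5:ℝ) ^ (3.5:ℝ) / Real.Gamma 3.5 * (Real.Gamma 4.5 * (3.5:ℝ) ^ (-(4.5:ℝ)))
          = 3.5 * ((3.5:ℝ) ^ (3.5:ℝ) * (3.5:ℝ) ^ (-(4.5:ℝ)))
            * (Real.Gamma 3.5 / Real.Gamma 3.5) := by rw [hΓ45]; ring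
        _ = 1 := by
            rw [e, div_self hΓpos.ne', mul_one, Real.rpow_neg_one]
            norm_num
    rw [hv] at h
    refine h.congr_fun fun l => ?_
    rw [hP_def]; ring
  -- mean : HasSum (fun l => l * P l) ((9/7) * μ)
  have h2 := key_hasSum (a := 3.5) (s := 5.5) h35 (by norm_num) hμ
  have hL : HasSum (fun l : ℕ => (l : ℝ) * P l) ((9 / 7) * μ) := by
    have h := h2.mul_left (μ * ((3.5:ℝ) ^ (3.5:ℝ) / Real.Gamma 3.5))
    have hshift : ∀ m : ℕ,
        μ * ((3.5:ℝ) ^ (3.5:ℝ) / Real.Gamma 3.5) *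
          (Real.Gamma ((m : ℝ) + 5.5) / (m.factorial : ℝ) * μ ^ m *
            (3.5 + μ) ^ (-((m : ℝ) + 5.5)))
        = ((m + 1 : ℕ) : ℝ) * P (m + 1) := by
      intro m
      rw [hP_def]
      simp only [Nat.factorial_succ, Nat.cast_mul, Nat.cast_add, Nat.cast_one]
      rw [show ((m:ℝ) + 1) + 4.5 = (m:ℝ) + 5.5 by ring, pow_succ]
      have hm1 : ((m:ℝ) + 1) ≠ 0 := by positivity
      have hmf : ((m.factorial : ℝ)) ≠ 0 := by positivity
      field_simp
    have h' : HasSum (fun m : ℕ => ((m + 1 : ℕ) : ℝ) * P (m + 1))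
        (μ * ((3.5:ℝ) ^ (3.5:ℝ) / Real.Gamma 3.5) *
          (Real.Gamma 5.5 * (3.5:ℝ) ^ (-(5.5:ℝ)))) :=
      h.congr_fun fun m => (hshift m).symm
    have hv : μ * ((3.5:ℝ) ^ (3.5:ℝ) / Real.Gamma 3.5) *
        (Real.Gamma 5.5 * (3.5:ℝ) ^ (-(5.5:ℝ))) = (9 / 7) * μ := by
      rw [hΓ55, hΓ45]
      have e1 : (3.5:ℝ) ^ (3.5:ℝ) * (3.5:ℝ) ^ (-(5.5:ℝ)) = (3.5:ℝ) ^ (-(2:ℝ)) :=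
        (hpow 3.5 (-5.5)).trans (by norm_num)
      have e2 : (3.5:ℝ) ^ (-(2:ℝ)) = 1 / (3.5 ^ (2:ℕ) : ℝ) := by
        rw [Real.rpow_neg h35.le, ← Real.rpow_natCast 3.5 2]
        norm_num
      calc μ * ((3.5:ℝ) ^ (3.5:ℝ) / Real.Gamma 3.5) *
          (4.5 * (3.5 * Real.Gamma 3.5) * (3.5:ℝ) ^ (-(5.5:ℝ)))
          = μ * 4.5 * 3.5 * ((3.5:ℝ) ^ (3.5:ℝ) * (3.5:ℝ) ^ (-(5.5:ℝ)))
            * (Real.Gamma 3.5 / Real.Gamma 3.5) := by ring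
        _ = (9 / 7) * μ := by
            rw [e1, e2, div_self hΓpos.ne']
            ring
    rw [hv] at h'
    have := (hasSum_nat_add_iff (f := fun l : ℕ => (l : ℝ) * P l) 1).mp h'
    simpa using this
  have hLP : HasSum (fun l : ℕ => ((l : ℝ) + 1) * P l) (1 + (9 / 7) * μ) := by
    have h := hL.add hP
    rw [show (9/7) * μ + 1 = 1 + (9/7) * μ by ring] at h
    exact h.congr_fun fun l => by ring
  exact ⟨hL.tsum_eq, hLP.tsum_eq⟩
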